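/- Let F₄ be the finite field with four elements. A function f : F₄ × F₄ → F₄ is a reduced local permutation polynomial over F₄ if and only if there exists a ∈ F₄ such that f(x,y) = (a³xy + a(x+y) + a²)xy + x + y for all x, y. In particular, there are exactly 4 reduced LPPs over F₄. -/

import Mathlib

/-- The field with four elements. -/
abbrev F₄ : Type := GaloisField 2 2

/-- `f : F × F → F` is a local permutation polynomial if both sections
`x ↦ f (x, a)` and `x ↦ f (a, x)` are bijections of `F` for every `a`. -/
def IsLPP {F : Type*} (f : F × F → F) : Prop :=
  ∀ a : F, Function.Bijective (fun x => f (x, a)) ∧ Function.Bijective (fun x => f (a, x))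

/-- `f` is reduced if `f (x, 0) = x` and `f (0, y) = y` for all `x, y`. -/
def IsReducedLPP {F : Type*} [Zero F] (f : F × F → F) : Prop :=
  (∀ x : F, f (x, 0) = x) ∧ (∀ y : F, f (0, y) = y)

/-! ### An explicit model of the field with four elements -/

inductive K4 : Type
  | o | e | a | b
  deriving DecidableEq

instance : Fintype K4 :=
  ⟨⟨↑[K4.o, K4.e, K4.a, K4.b], by decide⟩, fun x => by cases x <;> decide⟩

namespace K4

instance : Zero K4 := ⟨o⟩
instance : One K4 := ⟨e⟩

instance : Add K4 := ⟨fun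
  | o, x => x
  | x, o => x
  | e, e => o | e, a => b | e, b => a
  | a, e => b | a, a => o | a, b => e
  | b, e => a | b, a => e | b, b => o⟩

instance : Mul K4 := ⟨fun
  | o, _ => o
  | _, o => o
  | e, x => x
  | x, e => x
  | a, a => b | a, b => e
  | b, a => e | b, b => a⟩

instance : Neg K4 := ⟨id⟩

instance : CommRing K4 where
  add_assoc := by decide
  zero_add := by decide
  add_zero := by decide
  add_comm := by decide
  left_distrib := by decide
  right_distrib := by decide
  zero_mul := by decide
  mul_zero := by decide
  mul_assoc := by decide
  one_mul := by decide
  mul_one := by decide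
  neg_add_cancel := by decide
  mul_comm := by decide
  nsmul := nsmulRec
  zsmul := zsmulRec

theorem isField : IsField K4 where
  exists_pair_ne := ⟨o, e, by decide⟩
  mul_comm := mul_comm
  mul_inv_cancel := by decide

noncomputable instance : Field K4 := isField.toField

instance : CharP K4 2 := by
  have h : ringChar K4 = 2 := CharP.ringChar_of_prime_eq_zero Nat.prime_two (by decide)
  exact h ▸ ringChar.charP K4

/-- The canonical shape of a reduced LPP over F₄. -/
def P {R : Type*} [CommRing R] (c x y : R) : R :=
  (c ^ 3 * x * y + c * (x + y) + c ^ 2) * x * y + x + y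

theorem Pzero : ∀ (c x : K4), P c 0 x = x ∧ P c x 0 = x := by decide

theorem Pbij : ∀ (c d : K4),
    Function.Bijective (fun x => P c x d) ∧ Function.Bijective (fun x => P c d x) := by
  decide

theorem Pinj : Function.Injective (fun c : K4 => fun p : K4 × K4 => P c p.1 p.2) := by
  decide

set_option synthInstance.maxHeartbeats 1000000 in
set_option synthInstance.maxSize 1000000 in
set_option maxRecDepth 100000 in
set_option maxHeartbeats 4000000 in
theorem key : ∀ qee : K4, qee ≠ e →
    ∀ qea : K4, (qea ≠ e ∧ qea ≠ a ∧ qea ≠ qee) →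
    ∀ qeb : K4, (qeb ≠ e ∧ qeb ≠ b ∧ qeb ≠ qee ∧ qeb ≠ qea) →
    ∀ qae : K4, (qae ≠ a ∧ qae ≠ e ∧ qae ≠ qee) →
    ∀ qaa : K4, (qaa ≠ a ∧ qaa ≠ qae ∧ qaa ≠ qea) →
    ∀ qab : K4, (qab ≠ a ∧ qab ≠ b ∧ qab ≠ qae ∧ qab ≠ qaa ∧ qab ≠ qeb) →
    ∀ qbe : K4, (qbe ≠ b ∧ qbe ≠ e ∧ qbe ≠ qee ∧ qbe ≠ qae) →
    ∀ qba : K4, (qba ≠ b ∧ qba ≠ a ∧ qba ≠ qbe ∧ qba ≠ qea ∧ qba ≠ qaa) →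
    ∀ qbb : K4, (qbb ≠ b ∧ qbb ≠ qbe ∧ qbb ≠ qba ∧ qbb ≠ qeb ∧ qbb ≠ qab) →
    ∃ c : K4, qee = P c e e ∧ qea = P c e a ∧ qeb = P c e b ∧
      qae = P c a e ∧ qaa = P c a a ∧ qab = P c a b ∧
      qbe = P c b e ∧ qba = P c b a ∧ qbb = P c b b := by decide

/-- The classification over the explicit model. -/
theorem k4_iff (f : K4 × K4 → K4) :
    (IsLPP f ∧ IsReducedLPP f) ↔ ∃ c : K4, ∀ x y : K4, f (x, y) = P c x y := by
  constructor
  · rintro ⟨hl, hr1, hr2⟩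
    have colne : ∀ y x x' : K4, x ≠ x' → f (x, y) ≠ f (x', y) :=
      fun y _ _ h => (hl y).1.injective.ne h
    have rowne : ∀ x y y' : K4, y ≠ y' → f (x, y) ≠ f (x, y') :=
      fun x _ _ h => (hl x).2.injective.ne h
    have c1 : f (e, e) ≠ e := by
      have := rowne e e 0 (by decide); rw [hr1 e] at this; exact this
    have c2 : f (e, a) ≠ e := by
      have := rowne e a 0 (by decide); rw [hr1 e] at this; exact this
    have c2' : f (e, a) ≠ a := by
      have := colne a e 0 (by decide); rw [hr2 a] at this; exact this
    have c3 : f (e, b) ≠ e := by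
      have := rowne e b 0 (by decide); rw [hr1 e] at this; exact this
    have c3' : f (e, b) ≠ b := by
      have := colne b e 0 (by decide); rw [hr2 b] at this; exact this
    have c4 : f (a, e) ≠ a := by
      have := rowne a e 0 (by decide); rw [hr1 a] at this; exact this
    have c4' : f (a, e) ≠ e := by
      have := colne e a 0 (by decide); rw [hr2 e] at this; exact this
    have c5 : f (a, a) ≠ a := by
      have := rowne a a 0 (by decide); rw [hr1 a] at this; exact this
    have c6 : f (a, b) ≠ a := by
      have := rowne a b 0 (by decide); rw [hr1 a] at this; exact this
    have c6' : f (a, b) ≠ b := by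
      have := colne b a 0 (by decide); rw [hr2 b] at this; exact this
    have c7 : f (b, e) ≠ b := by
      have := rowne b e 0 (by decide); rw [hr1 b] at this; exact this
    have c7' : f (b, e) ≠ e := by
      have := colne e b 0 (by decide); rw [hr2 e] at this; exact this
    have c8 : f (b, a) ≠ b := by
      have := rowne b a 0 (by decide); rw [hr1 b] at this; exact this
    have c8' : f (b, a) ≠ a := by
      have := colne a b 0 (by decide); rw [hr2 a] at this; exact this
    have c9 : f (b, b) ≠ b := by
      have := rowne b b 0 (by decide); rw [hr1 b] at this; exact this
    obtain ⟨c, h1, h2, h3, h4, h5, h6, h7, h8, h9⟩ :=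
      key (f (e, e)) c1
        (f (e, a)) ⟨c2, c2', rowne e a e (by decide)⟩
        (f (e, b)) ⟨c3, c3', rowne e b e (by decide), rowne e b a (by decide)⟩
        (f (a, e)) ⟨c4, c4', colne e a e (by decide)⟩
        (f (a, a)) ⟨c5, rowne a a e (by decide), colne a a e (by decide)⟩
        (f (a, b)) ⟨c6, c6', rowne a b e (by decide), rowne a b a (by decide),
          colne b a e (by decide)⟩
        (f (b, e)) ⟨c7, c7', colne e b e (by decide), colne e b a (by decide)⟩
        (f (b, a)) ⟨c8, c8', rowne b a e (by decide), colne a b e (by decide),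
          colne a b a (by decide)⟩
        (f (b, b)) ⟨c9, rowne b b e (by decide), rowne b b a (by decide),
          colne b b e (by decide), colne b b a (by decide)⟩
    refine ⟨c, fun x y => ?_⟩
    cases x <;> cases y
    · exact (hr2 _).trans (Pzero c _).1.symm
    · exact (hr2 _).trans (Pzero c _).1.symm
    · exact (hr2 _).trans (Pzero c _).1.symm
    · exact (hr2 _).trans (Pzero c _).1.symm
    · exact (hr1 _).trans (Pzero c _).2.symm
    · exact h1
    · exact h2
    · exact h3
    · exact (hr1 _).trans (Pzero c _).2.symm
    · exact h4
    · exact h5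
    · exact h6
    · exact (hr1 _).trans (Pzero c _).2.symm
    · exact h7
    · exact h8
    · exact h9
  · rintro ⟨c, h⟩
    refine ⟨fun d => ?_, fun x => (h x 0).trans (Pzero c x).2, fun y => (h 0 y).trans (Pzero c y).1⟩
    constructor
    · have : (fun x => f (x, d)) = fun x => P c x d := funext fun x => h x d
      rw [this]; exact (Pbij c d).1
    · have : (fun x => f (d, x)) = fun x => P c d x := funext fun x => h d x
      rw [this]; exact (Pbij c d).2

end K4

/-! ### Transfer to `F₄` -/

noncomputable instance : Algebra (ZMod 2) K4 := ZMod.algebra K4 2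

noncomputable def k4AlgEquiv : K4 ≃ₐ[ZMod 2] F₄ :=
  GaloisField.algEquivGaloisField 2 2 (by
    rw [Nat.card_eq_fintype_card]
    decide)

noncomputable def k4Equiv : K4 ≃+* F₄ := k4AlgEquiv.toRingEquiv

noncomputable def transferFun (f : F₄ × F₄ → F₄) : K4 × K4 → K4 :=
  fun p => k4Equiv.symm (f (k4Equiv p.1, k4Equiv p.2))

theorem transfer_lpp (f : F₄ × F₄ → F₄) :
    (IsLPP f ∧ IsReducedLPP f) ↔ (IsLPP (transferFun f) ∧ IsReducedLPP (transferFun f)) := by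
  set e := k4Equiv with he
  constructor
  · rintro ⟨hl, hr1, hr2⟩
    refine ⟨fun c => ⟨?_, ?_⟩, fun x => ?_, fun y => ?_⟩
    · exact e.symm.bijective.comp ((hl (e c)).1.comp e.bijective)
    · exact e.symm.bijective.comp ((hl (e c)).2.comp e.bijective)
    · show e.symm (f (e x, e 0)) = x
      rw [map_zero, hr1, e.symm_apply_apply]
    · show e.symm (f (e 0, e y)) = y
      rw [map_zero, hr2, e.symm_apply_apply]
  · rintro ⟨hl, hr1, hr2⟩
    refine ⟨fun c => ⟨?_, ?_⟩, fun x => ?_, fun y => ?_⟩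
    · have : (fun x => f (x, c)) = fun x => e (transferFun f (e.symm x, e.symm c)) := by
        funext x
        simp [transferFun, ← he]
      rw [this]
      exact e.bijective.comp ((hl (e.symm c)).1.comp e.symm.bijective)
    · have : (fun x => f (c, x)) = fun x => e (transferFun f (e.symm c, e.symm x)) := by
        funext x
        simp [transferFun, ← he]
      rw [this]
      exact e.bijective.comp ((hl (e.symm c)).2.comp e.symm.bijective)
    · have := congrArg e (hr1 (e.symm x))
      simpa [transferFun, ← he] using this
    · have := congrArg e (hr2 (e.symm y))
      simpa [transferFun, ← he] using this

theorem transfer_formula (f : F₄ × F₄ → F₄) :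
    (∃ a : F₄, ∀ x y : F₄, f (x, y) = K4.P a x y) ↔
      (∃ c : K4, ∀ x y : K4, transferFun f (x, y) = K4.P c x y) := by
  set e := k4Equiv with he
  constructor
  · rintro ⟨a, h⟩
    refine ⟨e.symm a, fun x y => ?_⟩
    show e.symm (f (e x, e y)) = _
    rw [h]
    simp [K4.P, map_add, map_mul, map_pow]
  · rintro ⟨c, h⟩
    refine ⟨e c, fun x y => ?_⟩
    have := congrArg e (h (e.symm x) (e.symm y))
    simp only [transferFun, ← he, RingEquiv.apply_symm_apply] at this
    rw [this]
    simp [K4.P, map_add, map_mul, map_pow]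

/-- A function `f : F₄ × F₄ → F₄` is a reduced LPP over `F₄`
if and only if `f (x, y) = (a³xy + a(x+y) + a²)xy + x + y` for some `a ∈ F₄`;
in particular there are exactly `4` reduced LPPs over `F₄`. -/
theorem stmt_6 :
    (∀ f : F₄ × F₄ → F₄, (IsLPP f ∧ IsReducedLPP f) ↔
      ∃ a : F₄, ∀ x y : F₄,
        f (x, y) = (a ^ 3 * x * y + a * (x + y) + a ^ 2) * x * y + x + y) ∧
    Nat.card {f : F₄ × F₄ → F₄ | IsLPP f ∧ IsReducedLPP f} = 4 := by
  have main : ∀ f : F₄ × F₄ → F₄, (IsLPP f ∧ IsReducedLPP f) ↔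
      ∃ a : F₄, ∀ x y : F₄, f (x, y) = K4.P a x y := by
    intro f
    rw [transfer_lpp, K4.k4_iff, transfer_formula]
  refine ⟨main, ?_⟩
  -- counting
  have hset : {f : F₄ × F₄ → F₄ | IsLPP f ∧ IsReducedLPP f} =
      Set.range (fun a : F₄ => fun p : F₄ × F₄ => K4.P a p.1 p.2) := by
    ext f
    rw [Set.mem_setOf_eq, main f]
    constructor
    · rintro ⟨a, h⟩
      exact ⟨a, by funext p; exact (h p.1 p.2).symm⟩
    · rintro ⟨a, h⟩
      exact ⟨a, fun x y => congrFun h.symm (x, y)⟩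
  rw [hset]
  have hinj : Function.Injective (fun a : F₄ => fun p : F₄ × F₄ => K4.P a p.1 p.2) := by
    intro a a' h
    set e := k4Equiv with he
    have : ∀ x y : K4, K4.P (e.symm a) x y = K4.P (e.symm a') x y := by
      intro x y
      have := congrFun h (e x, e y)
      have := congrArg e.symm this
      simpa [K4.P, map_add, map_mul, map_pow] using this
    have h2 : e.symm a = e.symm a' := K4.Pinj (funext fun p => this p.1 p.2)
    exact e.symm.injective h2
  rw [Nat.card_range_of_injective hinj]
  exact (GaloisField.card 2 2 (by norm_num)).trans (by norm_num)
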